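/- Let X be a reflexive Banach space. Then X satisfies the Kadets-Klee property if and only if X is nearly strictly convex and satisfies the property (HS). -/

import Mathlib

open Metric Filter Topology NormedSpace

noncomputable section

/-- The face `S(X, f, 0) = {y ∈ B_X : f(y) = 1}` determined by a functional `f`. -/
def face (X : Type*) [NormedAddCommGroup X] [NormedSpace ℝ X] (f : X →L[ℝ] ℝ) : Set X :=
  {y | ‖y‖ ≤ 1 ∧ f y = 1}

/-- Property (HS). -/
def HSProp (X : Type*) [NormedAddCommGroup X] [NormedSpace ℝ X] : Prop :=
  ∀ f : X →L[ℝ] ℝ, ‖f‖ = 1 → (face X f).Nonempty →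
    ∀ xs : ℕ → X, (∀ n, ‖xs n‖ ≤ 1) →
      Tendsto (fun n => f (xs n)) atTop (𝓝 1) →
      Tendsto (fun n => infDist (xs n) (face X f)) atTop (𝓝 0)

/-- Property (HLUR). -/
def HLUR (X : Type*) [NormedAddCommGroup X] [NormedSpace ℝ X] : Prop :=
  ∀ x : X, ‖x‖ = 1 → ∀ xs : ℕ → X, (∀ n, ‖xs n‖ = 1) →
    Tendsto (fun n => ‖xs n + x‖) atTop (𝓝 2) →
    ∀ f : X →L[ℝ] ℝ, ‖f‖ = 1 → f x = 1 →
      Tendsto (fun n => infDist (xs n) (face X f)) atTop (𝓝 0)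

/-- Local uniform rotundity. -/
def LUR (X : Type*) [NormedAddCommGroup X] [NormedSpace ℝ X] : Prop :=
  ∀ x : X, ‖x‖ = 1 → ∀ xs : ℕ → X, (∀ n, ‖xs n‖ = 1) →
    Tendsto (fun n => ‖xs n + x‖) atTop (𝓝 2) → Tendsto xs atTop (𝓝 x)

/-- Compact local uniform rotundity. -/
def CLUR (X : Type*) [NormedAddCommGroup X] [NormedSpace ℝ X] : Prop :=
  ∀ x : X, ‖x‖ = 1 → ∀ xs : ℕ → X, (∀ n, ‖xs n‖ = 1) →
    Tendsto (fun n => ‖xs n + x‖) atTop (𝓝 2) →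
    ∃ φ : ℕ → ℕ, StrictMono φ ∧ ∃ z : X, Tendsto (xs ∘ φ) atTop (𝓝 z)

/-- Local U-convexity. -/
def LocallyUConvex (X : Type*) [NormedAddCommGroup X] [NormedSpace ℝ X] : Prop :=
  ∀ x : X, ‖x‖ = 1 → ∀ xs : ℕ → X, (∀ n, ‖xs n‖ = 1) →
    Tendsto (fun n => ‖xs n + x‖) atTop (𝓝 2) →
    ∃ f : X →L[ℝ] ℝ, ‖f‖ = 1 ∧ f x = 1 ∧ Tendsto (fun n => f (xs n)) atTop (𝓝 1)

/-- Strong local U-convexity. -/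
def StronglyLocallyUConvex (X : Type*) [NormedAddCommGroup X] [NormedSpace ℝ X] : Prop :=
  ∀ x : X, ‖x‖ = 1 → ∀ xs : ℕ → X, (∀ n, ‖xs n‖ = 1) →
    Tendsto (fun n => ‖xs n + x‖) atTop (𝓝 2) →
    ∀ f : X →L[ℝ] ℝ, ‖f‖ = 1 → f x = 1 → Tendsto (fun n => f (xs n)) atTop (𝓝 1)

/-- Rotundity (strict convexity): every face has at most one element. -/
def Rotund (X : Type*) [NormedAddCommGroup X] [NormedSpace ℝ X] : Prop :=
  ∀ f : X →L[ℝ] ℝ, ‖f‖ = 1 → (face X f).Subsingleton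

/-- Near strict convexity: every face is norm-compact. -/
def NSC (X : Type*) [NormedAddCommGroup X] [NormedSpace ℝ X] : Prop :=
  ∀ f : X →L[ℝ] ℝ, ‖f‖ = 1 → IsCompact (face X f)

/-- Kadets-Klee property. -/
def KadetsKlee (X : Type*) [NormedAddCommGroup X] [NormedSpace ℝ X] : Prop :=
  ∀ (xs : ℕ → X) (x : X),
    (∀ f : X →L[ℝ] ℝ, Tendsto (fun n => f (xs n)) atTop (𝓝 (f x))) →
    Tendsto (fun n => ‖xs n‖) atTop (𝓝 ‖x‖) → Tendsto xs atTop (𝓝 x)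

/-- Alternatively convex or smooth. -/
def ACS (X : Type*) [NormedAddCommGroup X] [NormedSpace ℝ X] : Prop :=
  ∀ x y : X, ‖x‖ = 1 → ‖y‖ = 1 → ∀ f : X →L[ℝ] ℝ, ‖f‖ = 1 →
    ‖x + y‖ = 2 → f x = 1 → f y = 1

/-- Smoothness: each unit vector has a unique norming functional. -/
def SmoothSpace (X : Type*) [NormedAddCommGroup X] [NormedSpace ℝ X] : Prop :=
  ∀ x : X, ‖x‖ = 1 → ∃! f : X →L[ℝ] ℝ, ‖f‖ = 1 ∧ f x = 1

/-- Reflexivity of a normed space. -/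
def ReflexiveSpace (X : Type*) [NormedAddCommGroup X] [NormedSpace ℝ X] : Prop :=
  Function.Surjective (inclusionInDoubleDual ℝ X)

/-- Strong rotundity: reflexive, rotund and Kadets-Klee. -/
def StronglyRotund (X : Type*) [NormedAddCommGroup X] [NormedSpace ℝ X] : Prop :=
  ReflexiveSpace X ∧ Rotund X ∧ KadetsKlee X


section AuxKK

variable {X : Type*} [NormedAddCommGroup X] [NormedSpace ℝ X]

/-- Ultrafilter weak limit in a reflexive space. -/
lemma ultra_weak_limit (hrefl : ReflexiveSpace X) (U : Ultrafilter ℕ)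
    (xs : ℕ → X) (hb : ∀ n, ‖xs n‖ ≤ 1) :
    ∃ x : X, ‖x‖ ≤ 1 ∧ ∀ f : X →L[ℝ] ℝ,
      Tendsto (fun n => f (xs n)) (U : Filter ℕ) (𝓝 (f x)) := by
  have key : ∀ f : X →L[ℝ] ℝ, ∃ c : ℝ, c ∈ Set.Icc (-‖f‖) ‖f‖ ∧
      Tendsto (fun n => f (xs n)) (U : Filter ℕ) (𝓝 c) := by
    intro f
    have hmem : ∀ n, f (xs n) ∈ Set.Icc (-‖f‖) ‖f‖ := by
      intro n
      have h1 : |f (xs n)| ≤ ‖f‖ := by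
        calc |f (xs n)| = ‖f (xs n)‖ := (Real.norm_eq_abs _).symm
          _ ≤ ‖f‖ * ‖xs n‖ := f.le_opNorm _
          _ ≤ ‖f‖ * 1 := by
            exact mul_le_mul_of_nonneg_left (hb n) (norm_nonneg f)
          _ = ‖f‖ := mul_one _
      exact abs_le.mp h1
    obtain ⟨c, hc, hc2⟩ := isCompact_Icc.ultrafilter_le_nhds (U.map fun n => f (xs n)) (by
      rw [Ultrafilter.coe_map]
      exact Filter.tendsto_principal.mpr (Eventually.of_forall hmem))
    exact ⟨c, hc, by rwa [Ultrafilter.coe_map] at hc2⟩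
  choose l hl1 hl2 using key
  have hadd : ∀ f g : X →L[ℝ] ℝ, l (f + g) = l f + l g := by
    intro f g
    refine tendsto_nhds_unique (hl2 (f + g)) ?_
    simpa using (hl2 f).add (hl2 g)
  have hsmul : ∀ (c : ℝ) (f : X →L[ℝ] ℝ), l (c • f) = c * l f := by
    intro c f
    refine tendsto_nhds_unique (hl2 (c • f)) ?_
    simpa using (hl2 f).const_mul c
  let Λ : StrongDual ℝ X →ₗ[ℝ] ℝ :=
    { toFun := l, map_add' := hadd, map_smul' := hsmul }
  have hbound : ∀ f : StrongDual ℝ X, ‖Λ f‖ ≤ 1 * ‖f‖ := by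
    intro f
    have h := hl1 f
    rw [Real.norm_eq_abs, abs_le, one_mul]
    exact ⟨h.1, h.2⟩
  obtain ⟨x, hx⟩ := hrefl (LinearMap.mkContinuous Λ 1 hbound)
  have hfx : ∀ f : X →L[ℝ] ℝ, f x = l f := by
    intro f
    have h := congrArg (fun T : StrongDual ℝ (StrongDual ℝ X) => T f) hx
    exact (by simpa [NormedSpace.dual_def] using h : f x = Λ f)
  refine ⟨x, ?_, fun f => by rw [hfx f]; exact hl2 f⟩
  refine norm_le_dual_bound ℝ x zero_le_one ?_
  intro f
  rw [hfx f]
  exact hbound f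

lemma diagonal_subseq (g : ℕ → (X →L[ℝ] ℝ)) (hg : ∀ j, ‖g j‖ ≤ 1)
    (xs : ℕ → X) (hb : ∀ n, ‖xs n‖ ≤ 1) :
    ∃ φ : ℕ → ℕ, StrictMono φ ∧
      ∀ j, ∃ c : ℝ, Tendsto (fun k => g j (xs (φ k))) atTop (𝓝 c) := by
  have hS : IsCompact (Set.pi Set.univ (fun _ : ℕ => Set.Icc (-1 : ℝ) 1)) :=
    isCompact_univ_pi fun _ => isCompact_Icc
  have hmem : ∀ n, (fun j => g j (xs n)) ∈ Set.pi Set.univ (fun _ : ℕ => Set.Icc (-1 : ℝ) 1) := by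
    intro n j _
    have h1 : |g j (xs n)| ≤ 1 := by
      calc |g j (xs n)| = ‖g j (xs n)‖ := (Real.norm_eq_abs _).symm
        _ ≤ ‖g j‖ * ‖xs n‖ := (g j).le_opNorm _
        _ ≤ 1 * 1 := mul_le_mul (hg j) (hb n) (norm_nonneg _) zero_le_one
        _ = 1 := one_mul _
    exact abs_le.mp h1
  obtain ⟨w, -, φ, hφ, hconv⟩ := hS.isSeqCompact hmem
  refine ⟨φ, hφ, fun j => ⟨w j, ?_⟩⟩
  exact tendsto_pi_nhds.mp hconv j

lemma exists_dual_annihilator {Y : Submodule ℝ X} (hY : IsClosed (Y : Set X)) {x : X}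
    (hx : x ∉ Y) :
    ∃ f : X →L[ℝ] ℝ, (∀ y ∈ Y, f y = 0) ∧ f x ≠ 0 := by
  obtain ⟨f, u, h1, h2⟩ := geometric_hahn_banach_closed_point Y.convex hY hx
  have hzero : ∀ y ∈ Y, f y = 0 := by
    intro y hy
    by_contra hne
    have hmem : ((u + |u| + 1) / f y) • y ∈ Y := Y.smul_mem _ hy
    have := h1 _ hmem
    rw [map_smul] at this
    simp only [smul_eq_mul] at this
    rw [div_mul_cancel₀ _ hne] at this
    have : u + |u| + 1 < u := this
    have h0 : 0 ≤ |u| := abs_nonneg u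
    linarith
  have h0 : f x > u := h2
  have hu : (0 : ℝ) < u := by
    have := h1 0 Y.zero_mem
    simpa using this
  exact ⟨f, hzero, by linarith⟩

/-- Weak sequential compactness of the unit ball in a reflexive space. -/
lemma weak_seq_compact (hrefl : ReflexiveSpace X) (xs : ℕ → X) (hb : ∀ n, ‖xs n‖ ≤ 1) :
    ∃ φ : ℕ → ℕ, StrictMono φ ∧ ∃ x : X, ‖x‖ ≤ 1 ∧
      ∀ f : X →L[ℝ] ℝ, Tendsto (fun k => f (xs (φ k))) atTop (𝓝 (f x)) := by
  rcases subsingleton_or_nontrivial X with hsub | hnt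
  · refine ⟨id, strictMono_id, 0, by simp, fun f => ?_⟩
    have h0 : ∀ k, xs (id k) = 0 := fun k => Subsingleton.elim _ _
    simp only [h0]
    exact tendsto_const_nhds
  -- the closed span of the sequence
  set Y : Submodule ℝ X := (Submodule.span ℝ (Set.range xs)).topologicalClosure with hYdef
  have hYclosed : IsClosed (Y : Set X) := Submodule.isClosed_topologicalClosure _
  have hxsY : ∀ n, xs n ∈ Y :=
    fun n => Submodule.le_topologicalClosure _ (Submodule.subset_span ⟨n, rfl⟩)
  -- a countable dense family in Y
  have hsep : TopologicalSpace.IsSeparable (Y : Set X) := by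
    have h1 : TopologicalSpace.IsSeparable (Set.range xs) :=
      (Set.countable_range xs).isSeparable
    have h2 := h1.span (R := ℝ)
    have h3 := h2.closure
    rwa [hYdef, Submodule.topologicalClosure_coe]
  obtain ⟨c, hcct, hcsub⟩ := hsep
  have hcne : c.Nonempty := by
    rcases c.eq_empty_or_nonempty with h | h
    · exfalso
      have := hcsub Y.zero_mem
      rw [h, closure_empty] at this
      exact this
    · exact h
  obtain ⟨d, hd⟩ := Set.Countable.exists_eq_range hcct hcne
  -- norming functionals for the dense family
  have hgex : ∀ j : ℕ, ∃ g : X →L[ℝ] ℝ, ‖g‖ = 1 ∧ g (d j) = ‖d j‖ :=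
    fun j => exists_dual_vector' ℝ (d j)
  choose g hg1 hg2 using hgex
  -- the norming property
  have hnorming : ∀ y ∈ Y, (∀ j, g j y = 0) → y = 0 := by
    intro y hy hgy
    have hkey : ∀ ε : ℝ, 0 < ε → ‖y‖ ≤ 2 * ε := by
      intro ε hε
      have hyc : y ∈ closure c := hcsub hy
      rw [Metric.mem_closure_iff] at hyc
      obtain ⟨b, hbc, hby⟩ := hyc ε hε
      obtain ⟨j, rfl⟩ : ∃ j, d j = b := by
        rw [hd] at hbc; exact hbc
      have h1 : ‖y - d j‖ < ε := by rwa [← dist_eq_norm]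
      have h2 : g j y = g j (d j) + g j (y - d j) := by
        rw [map_sub]; ring
      have h3 : |g j (y - d j)| ≤ ‖y - d j‖ := by
        calc |g j (y - d j)| = ‖g j (y - d j)‖ := (Real.norm_eq_abs _).symm
          _ ≤ ‖g j‖ * ‖y - d j‖ := (g j).le_opNorm _
          _ = ‖y - d j‖ := by rw [hg1 j, one_mul]
      have h4 : ‖d j‖ ≥ ‖y‖ - ε := by
        have := norm_sub_norm_le (d j) y
        have h5 : ‖d j - y‖ < ε := by rwa [norm_sub_rev] at h1
        linarith [abs_le.mp (abs_norm_sub_norm_le (d j) y)]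
      have h6 : g j y ≥ ‖y‖ - 2 * ε := by
        rw [h2, hg2 j]
        have := abs_le.mp h3
        linarith
      rw [hgy j] at h6
      linarith
    by_contra hne
    have hpos : 0 < ‖y‖ := norm_pos_iff.mpr hne
    have := hkey (‖y‖ / 4) (by linarith)
    linarith
  -- diagonal subsequence
  obtain ⟨φ, hφ, hc⟩ := diagonal_subseq g (fun j => le_of_eq (hg1 j)) xs hb
  choose cc hcc using hc
  -- ultrafilter finer than atTop
  obtain ⟨U, hU⟩ : ∃ U : Ultrafilter ℕ, (U : Filter ℕ) ≤ atTop :=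
    ⟨Ultrafilter.of atTop, Ultrafilter.of_le atTop⟩
  -- the key: every "subsequence" has U-weak limit pinned down by (g, cc)
  have key : ∀ ns : ℕ → ℕ, Tendsto ns atTop atTop →
      ∃ x' : X, x' ∈ Y ∧ ‖x'‖ ≤ 1 ∧ (∀ j, g j x' = cc j) ∧
        ∀ f : X →L[ℝ] ℝ, Tendsto (fun k => f (xs (φ (ns k)))) (U : Filter ℕ) (𝓝 (f x')) := by
    intro ns hns
    obtain ⟨x', hx'1, hx'2⟩ := ultra_weak_limit hrefl U (fun k => xs (φ (ns k)))
      (fun k => hb _)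
    have hx'Y : x' ∈ Y := by
      by_contra hxY
      obtain ⟨f, hf0, hfx⟩ := exists_dual_annihilator hYclosed hxY
      have h1 : Tendsto (fun k => f (xs (φ (ns k)))) (U : Filter ℕ) (𝓝 (f x')) := hx'2 f
      have h2 : (fun k => f (xs (φ (ns k)))) = fun _ => (0 : ℝ) := by
        funext k; exact hf0 _ (hxsY _)
      rw [h2] at h1
      exact hfx (tendsto_nhds_unique tendsto_const_nhds h1).symm
    refine ⟨x', hx'Y, hx'1, fun j => ?_, hx'2⟩
    have h1 : Tendsto (fun k => g j (xs (φ (ns k)))) atTop (𝓝 (cc j)) :=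
      (hcc j).comp hns
    have h2 : Tendsto (fun k => g j (xs (φ (ns k)))) (U : Filter ℕ) (𝓝 (cc j)) :=
      h1.mono_left hU
    exact tendsto_nhds_unique (hx'2 (g j)) h2
  obtain ⟨x, hxY, hx1, hgx, hxU⟩ := key id tendsto_id
  refine ⟨φ, hφ, x, hx1, fun f => ?_⟩
  -- convergence of the full diagonal subsequence against f
  by_contra hnot
  rw [Metric.tendsto_atTop] at hnot
  push_neg at hnot
  obtain ⟨ε, hε, hfreq⟩ := hnot
  obtain ⟨ns, hnsmono, hns⟩ := extraction_of_frequently_atTop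
    (P := fun n => ε ≤ dist (f (xs (φ n))) (f x)) (frequently_atTop'.mpr <| by
      intro N
      obtain ⟨n, hn1, hn2⟩ := hfreq (N + 1)
      exact ⟨n, by omega, hn2⟩)
  obtain ⟨x', hx'Y, hx'1, hgx', hx'U⟩ := key ns hnsmono.tendsto_atTop
  have hxx' : x' = x := by
    have hsub : x' - x ∈ Y := Y.sub_mem hx'Y hxY
    have hg0 : ∀ j, g j (x' - x) = 0 := by
      intro j
      rw [map_sub, hgx j, hgx' j, sub_self]
    have := hnorming _ hsub hg0
    exact sub_eq_zero.mp this
  -- contradiction: values stay ε-away from f x but converge to f x' = f x along U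
  have h1 : Tendsto (fun k => f (xs (φ (ns k)))) (U : Filter ℕ) (𝓝 (f x)) := by
    rw [← hxx']; exact hx'U f
  have hclosed : IsClosed {t : ℝ | ε ≤ dist t (f x)} :=
    isClosed_le continuous_const (continuous_id.dist continuous_const)
  have hmem : f x ∈ {t : ℝ | ε ≤ dist t (f x)} :=
    hclosed.mem_of_tendsto h1 (Eventually.of_forall fun k => hns k)
  simp only [Set.mem_setOf_eq, dist_self] at hmem
  linarith

theorem kk_nsc (hrefl : ReflexiveSpace X) (hkk : KadetsKlee X) : NSC X := by
  intro f hf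
  have hseq : IsSeqCompact (face X f) := by
    intro ys hys
    have hb : ∀ n, ‖ys n‖ ≤ 1 := fun n => (hys n).1
    obtain ⟨φ, hφ, x, hx1, hweak⟩ := weak_seq_compact hrefl ys hb
    have hfx : f x = 1 := by
      have h1 : Tendsto (fun k => f (ys (φ k))) atTop (𝓝 (f x)) := hweak f
      have h2 : (fun k => f (ys (φ k))) = fun _ => (1 : ℝ) := funext fun k => (hys _).2
      rw [h2] at h1
      exact tendsto_nhds_unique h1 tendsto_const_nhds
    have hxnorm : ‖x‖ = 1 := by
      refine le_antisymm hx1 ?_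
      calc (1 : ℝ) = f x := hfx.symm
        _ ≤ |f x| := le_abs_self _
        _ ≤ ‖f‖ * ‖x‖ := by rw [← Real.norm_eq_abs]; exact f.le_opNorm x
        _ = ‖x‖ := by rw [hf, one_mul]
    have hysnorm : ∀ n, ‖ys n‖ = 1 := by
      intro n
      refine le_antisymm (hys n).1 ?_
      calc (1 : ℝ) = f (ys n) := (hys n).2.symm
        _ ≤ |f (ys n)| := le_abs_self _
        _ ≤ ‖f‖ * ‖ys n‖ := by rw [← Real.norm_eq_abs]; exact f.le_opNorm _
        _ = ‖ys n‖ := by rw [hf, one_mul]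
    have hnormconv : Tendsto (fun k => ‖ys (φ k)‖) atTop (𝓝 ‖x‖) := by
      have : (fun k => ‖ys (φ k)‖) = fun _ => (1 : ℝ) := funext fun k => hysnorm _
      rw [this, hxnorm]
      exact tendsto_const_nhds
    have := hkk (fun k => ys (φ k)) x (fun g => hweak g) hnormconv
    exact ⟨x, ⟨hx1, hfx⟩, φ, hφ, this⟩
  exact hseq.isCompact

theorem kk_hs (hrefl : ReflexiveSpace X) (hkk : KadetsKlee X) : HSProp X := by
  intro f hf hne xs hb htends
  by_contra hnot
  rw [Metric.tendsto_atTop] at hnot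
  push_neg at hnot
  obtain ⟨ε, hε, hfreq⟩ := hnot
  obtain ⟨ns, hnsmono, hns⟩ := extraction_of_frequently_atTop
    (P := fun n => ε ≤ dist (infDist (xs n) (face X f)) 0) (frequently_atTop'.mpr <| by
      intro N
      obtain ⟨n, hn1, hn2⟩ := hfreq (N + 1)
      exact ⟨n, by omega, hn2⟩)
  obtain ⟨φ, hφ, x, hx1, hweak⟩ := weak_seq_compact hrefl (fun k => xs (ns k))
    (fun k => hb _)
  have hcomp : Tendsto (fun j => f (xs (ns (φ j)))) atTop (𝓝 1) :=
    htends.comp ((hnsmono.tendsto_atTop).comp hφ.tendsto_atTop)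
  have hfx : f x = 1 := tendsto_nhds_unique (hweak f) hcomp
  have hxface : x ∈ face X f := ⟨hx1, hfx⟩
  -- norms tend to 1
  have hnorms : Tendsto (fun n => ‖xs n‖) atTop (𝓝 1) := by
    have hlow : ∀ n, f (xs n) ≤ ‖xs n‖ := by
      intro n
      calc f (xs n) ≤ |f (xs n)| := le_abs_self _
        _ ≤ ‖f‖ * ‖xs n‖ := by rw [← Real.norm_eq_abs]; exact f.le_opNorm _
        _ = ‖xs n‖ := by rw [hf, one_mul]
    exact tendsto_of_tendsto_of_tendsto_of_le_of_le htends tendsto_const_nhds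
      hlow hb
  have hnorms2 : Tendsto (fun j => ‖xs (ns (φ j))‖) atTop (𝓝 ‖x‖) := by
    have hx1' : ‖x‖ = 1 := by
      refine le_antisymm hx1 ?_
      calc (1 : ℝ) = f x := hfx.symm
        _ ≤ |f x| := le_abs_self _
        _ ≤ ‖f‖ * ‖x‖ := by rw [← Real.norm_eq_abs]; exact f.le_opNorm _
        _ = ‖x‖ := by rw [hf, one_mul]
    rw [hx1']
    exact hnorms.comp ((hnsmono.tendsto_atTop).comp hφ.tendsto_atTop)
  have hconv := hkk (fun j => xs (ns (φ j))) x (fun g => hweak g) hnorms2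
  -- so infDist tends to 0 along this subsequence, contradiction
  have hdist : Tendsto (fun j => dist (xs (ns (φ j))) x) atTop (𝓝 0) :=
    tendsto_iff_dist_tendsto_zero.mp hconv
  have hinfle : ∀ j, infDist (xs (ns (φ j))) (face X f) ≤ dist (xs (ns (φ j))) x :=
    fun j => infDist_le_dist_of_mem hxface
  have hεle : ∀ j, ε ≤ dist (xs (ns (φ j))) x := by
    intro j
    have h1 := hns (φ j)
    rw [Real.dist_eq, sub_zero, abs_of_nonneg (infDist_nonneg)] at h1
    exact h1.trans (hinfle j)
  have : ε ≤ 0 := ge_of_tendsto hdist (Eventually.of_forall hεle)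
  linarith

theorem nsc_hs_kk (hnsc : NSC X) (hhs : HSProp X) : KadetsKlee X := by
  intro xs x hweak hnorm
  by_cases hx0 : x = 0
  · subst hx0
    rw [norm_zero] at hnorm
    rw [tendsto_zero_iff_norm_tendsto_zero]
    simpa using hnorm
  · have hr : (0 : ℝ) < ‖x‖ := norm_pos_iff.mpr hx0
    obtain ⟨f, hf1, hf2c⟩ := exists_dual_vector ℝ x (norm_ne_zero_iff.mpr hx0)
    have hf2 : f x = ‖x‖ := by exact_mod_cast hf2c
    set r : ℝ := ‖x‖ with hrdef
    set m : ℕ → ℝ := fun n => max ‖xs n‖ r with hmdef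
    have hm : ∀ n, 0 < m n := fun n => lt_of_lt_of_le hr (le_max_right _ _)
    have hmne : ∀ n, m n ≠ 0 := fun n => (hm n).ne'
    set z : ℕ → X := fun n => (m n)⁻¹ • xs n with hzdef
    have hzb : ∀ n, ‖z n‖ ≤ 1 := by
      intro n
      rw [hzdef]
      simp only [norm_smul, norm_inv, Real.norm_eq_abs, abs_of_pos (hm n)]
      rw [inv_mul_le_iff₀ (hm n), mul_one]
      exact le_max_left _ _
    have hmlim : Tendsto m atTop (𝓝 r) := by
      have := hnorm.max (tendsto_const_nhds (x := r))
      rwa [max_self] at this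
    have hfz : Tendsto (fun n => f (z n)) atTop (𝓝 1) := by
      have h1 : ∀ n, f (z n) = (m n)⁻¹ * f (xs n) := by
        intro n
        rw [hzdef]
        simp [map_smul, smul_eq_mul]
      have h2 : Tendsto (fun n => (m n)⁻¹ * f (xs n)) atTop (𝓝 (r⁻¹ * f x)) :=
        (hmlim.inv₀ hr.ne').mul (hweak f)
      rw [hf2] at h2
      rw [show (‖x‖)⁻¹ * ‖x‖ = 1 from inv_mul_cancel₀ hr.ne'] at h2
      simpa only [h1] using h2
    have hFne : (face X f).Nonempty := by
      refine ⟨r⁻¹ • x, ?_, ?_⟩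
      · simp only [norm_smul, norm_inv, Real.norm_eq_abs, abs_of_pos hr]
        exact le_of_eq (inv_mul_cancel₀ hr.ne')
      · rw [map_smul, smul_eq_mul, hf2]
        exact inv_mul_cancel₀ hr.ne'
    have hFc : IsCompact (face X f) := hnsc f hf1
    have hinf : Tendsto (fun n => infDist (z n) (face X f)) atTop (𝓝 0) :=
      hhs f hf1 hFne z hzb hfz
    -- nearest points
    have hnear : ∀ n, ∃ w ∈ face X f, infDist (z n) (face X f) = dist (z n) w :=
      fun n => hFc.exists_infDist_eq_dist hFne (z n)
    choose w hw1 hw2 using hnear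
    have hdzw : Tendsto (fun n => dist (z n) (w n)) atTop (𝓝 0) := by
      have : (fun n => dist (z n) (w n)) = fun n => infDist (z n) (face X f) :=
        funext fun n => (hw2 n).symm
      rw [this]; exact hinf
    -- subsequence principle
    refine tendsto_of_subseq_tendsto fun ns hns => ?_
    obtain ⟨a, haF, ms, hms, hwconv⟩ := hFc.tendsto_subseq (x := fun k => w (ns k))
      (fun k => hw1 _)
    have hcomp : Tendsto (ns ∘ ms) atTop atTop := hns.comp hms.tendsto_atTop
    have hzconv : Tendsto (fun k => z (ns (ms k))) atTop (𝓝 a) := by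
      rw [tendsto_iff_dist_tendsto_zero]
      have hle : ∀ k, dist (z (ns (ms k))) a ≤
          dist (z (ns (ms k))) (w (ns (ms k))) + dist (w (ns (ms k))) a :=
        fun k => dist_triangle _ _ _
      have h1 : Tendsto (fun k => dist (z (ns (ms k))) (w (ns (ms k)))) atTop (𝓝 0) :=
        hdzw.comp hcomp
      have h2 : Tendsto (fun k => dist (w (ns (ms k))) a) atTop (𝓝 0) := by
        have := tendsto_iff_dist_tendsto_zero.mp hwconv
        exact this
      have hsum : Tendsto (fun k => dist (z (ns (ms k))) (w (ns (ms k))) +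
          dist (w (ns (ms k))) a) atTop (𝓝 0) := by
        have := h1.add h2; simpa using this
      exact squeeze_zero (fun k => dist_nonneg) hle hsum
    have hxsconv : Tendsto (fun k => xs (ns (ms k))) atTop (𝓝 (r • a)) := by
      have h1 : ∀ k, xs (ns (ms k)) = m (ns (ms k)) • z (ns (ms k)) := by
        intro k
        rw [hzdef]
        rw [smul_inv_smul₀ (hmne _)]
      have h2 : Tendsto (fun k => m (ns (ms k)) • z (ns (ms k))) atTop (𝓝 (r • a)) :=
        (hmlim.comp hcomp).smul hzconv
      simpa only [h1] using h2
    have hra : r • a = x := by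
      have : ∀ g : X →L[ℝ] ℝ, g x = g (r • a) := by
        intro g
        have h1 : Tendsto (fun k => g (xs (ns (ms k)))) atTop (𝓝 (g x)) :=
          (hweak g).comp hcomp
        have h2 : Tendsto (fun k => g (xs (ns (ms k)))) atTop (𝓝 (g (r • a))) :=
          (g.continuous.tendsto _).comp hxsconv
        exact tendsto_nhds_unique h1 h2
      exact ((eq_iff_forall_dual_eq ℝ).mpr this).symm
    exact ⟨ms, by rw [← hra]; exact hxsconv⟩

end AuxKK

theorem kk_iff_nsc_and_hs (X : Type*) [NormedAddCommGroup X] [NormedSpace ℝ X]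
    [CompleteSpace X] (hrefl : ReflexiveSpace X) :
    KadetsKlee X ↔ NSC X ∧ HSProp X := by
  constructor
  · intro hkk
    exact ⟨kk_nsc hrefl hkk, kk_hs hrefl hkk⟩
  · rintro ⟨hnsc, hhs⟩
    exact nsc_hs_kk hnsc hhs
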